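/- Let A and B be finite sets and let (A, B) be a pair of random variables on A × B with joint law P_{AB}, marginals P_A and P_B. Let (Ā, B̄) ∼ P_A ⊗ P_B be independent copies of the marginals. Let g : A × B → ℝ be such that g(Ā, B̄) is σ-subgaussian, i.e., log E[exp(t·(g(Ā,B̄) − E[g(Ā,B̄)]))] ≤ t²σ²/2 for all t ∈ ℝ. Then for every λ > 0, E[g(Ā, B̄)] − E[g(A, B)] ≤ λ·(log|A| − H(A|B)) + σ²/(2λ), where H(A|B) is the conditional Shannon entropy of A given B. -/

import Mathlib

open Finset Real

lemma aux_sum_le {ι : Type*} [Fintype ι] (p r : ι → ℝ)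
    (hp0 : ∀ i, 0 ≤ p i) (hp1 : ∑ i, p i = 1)
    (hr0 : ∀ i, 0 ≤ r i) (hr1 : ∑ i, r i ≤ 1)
    (hpr : ∀ i, 0 < p i → 0 < r i) :
    ∑ i, p i * Real.log (r i / p i) ≤ 0 := by
  have h : ∀ i, p i * Real.log (r i / p i) ≤ r i - p i := by
    intro i
    rcases eq_or_lt_of_le (hp0 i) with h0 | h0
    · simp [← h0]
      exact hr0 i
    · have hri := hpr i h0
      have hdiv : 0 < r i / p i := div_pos hri h0
      have hlog := Real.log_le_sub_one_of_pos hdiv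
      calc p i * Real.log (r i / p i) ≤ p i * (r i / p i - 1) :=
            mul_le_mul_of_nonneg_left hlog h0.le
        _ = r i - p i := by field_simp
  calc ∑ i, p i * Real.log (r i / p i) ≤ ∑ i, (r i - p i) :=
        Finset.sum_le_sum (fun i _ => h i)
    _ = (∑ i, r i) - 1 := by rw [Finset.sum_sub_distrib, hp1]
    _ ≤ 0 := by linarith

lemma dv_ineq {ι : Type*} [Fintype ι] (p q F : ι → ℝ)
    (hp0 : ∀ i, 0 ≤ p i) (hp1 : ∑ i, p i = 1)
    (hq0 : ∀ i, 0 ≤ q i) (hq1 : ∑ i, q i = 1)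
    (habs : ∀ i, q i = 0 → p i = 0) :
    ∑ i, p i * F i ≤ (∑ i, p i * Real.log (p i / q i))
      + Real.log (∑ i, q i * Real.exp (F i)) := by
  set Z := ∑ i, q i * Real.exp (F i) with hZ
  have hZpos : 0 < Z := by
    have hex : ∃ i, 0 < q i := by
      by_contra h
      push_neg at h
      have hz : ∀ i ∈ Finset.univ, q i = 0 := fun i _ => le_antisymm (h i) (hq0 i)
      rw [Finset.sum_eq_zero hz] at hq1
      norm_num at hq1
    obtain ⟨i, hi⟩ := hex
    have h1 : 0 < q i * Real.exp (F i) := mul_pos hi (Real.exp_pos _)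
    exact lt_of_lt_of_le h1 (Finset.single_le_sum
      (fun j _ => mul_nonneg (hq0 j) (Real.exp_pos _).le) (Finset.mem_univ i))
  set r : ι → ℝ := fun i => q i * Real.exp (F i) / Z with hr
  have key : ∑ i, p i * Real.log (r i / p i) ≤ 0 := by
    apply aux_sum_le p r hp0 hp1
    · intro i
      exact div_nonneg (mul_nonneg (hq0 i) (Real.exp_pos _).le) hZpos.le
    · rw [show ∑ i, r i = (∑ i, q i * Real.exp (F i)) / Z from (Finset.sum_div ..).symm]
      rw [← hZ, div_self hZpos.ne']
    · intro i hpi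
      have hqi : 0 < q i := lt_of_le_of_ne (hq0 i)
        (fun h => absurd (habs i h.symm) (ne_of_gt hpi))
      exact div_pos (mul_pos hqi (Real.exp_pos _)) hZpos
  have expand : ∀ i, p i * Real.log (r i / p i)
      = p i * F i - p i * Real.log (p i / q i) - p i * Real.log Z := by
    intro i
    rcases eq_or_lt_of_le (hp0 i) with h0 | h0
    · simp [← h0]
    · have hqi : 0 < q i := lt_of_le_of_ne (hq0 i)
        (fun h => absurd (habs i h.symm) (ne_of_gt h0))
      have : r i / p i = q i * Real.exp (F i) / Z / p i := rfl
      rw [this, Real.log_div (by positivity) h0.ne',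
          Real.log_div (by positivity) hZpos.ne',
          Real.log_mul hqi.ne' (Real.exp_ne_zero _), Real.log_exp,
          Real.log_div h0.ne' hqi.ne']
      ring
  rw [Finset.sum_congr rfl (fun i _ => expand i)] at key
  simp only [Finset.sum_sub_distrib] at key
  rw [← Finset.sum_mul, hp1, one_mul] at key
  linarith

lemma neg_entropy_le_log_card {A : Type*} [Fintype A] [Nonempty A] (w : A → ℝ)
    (hw0 : ∀ a, 0 ≤ w a) (hw1 : ∑ a, w a = 1) :
    -(∑ a, w a * Real.log (w a)) ≤ Real.log (Fintype.card A) := by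
  have hcard : (0:ℝ) < (Fintype.card A : ℝ) := by
    exact_mod_cast Fintype.card_pos
  have key := aux_sum_le w (fun _ => 1 / (Fintype.card A : ℝ)) hw0 hw1
    (fun _ => by positivity)
    (by rw [Finset.sum_const, nsmul_eq_mul, Finset.card_univ]; field_simp; exact le_refl _)
    (fun a _ => by positivity)
  have expand : ∀ a, w a * Real.log ((1 / (Fintype.card A : ℝ)) / w a)
      = -(w a * Real.log (Fintype.card A)) - w a * Real.log (w a) := by
    intro a
    rcases eq_or_lt_of_le (hw0 a) with h0 | h0
    · simp [← h0]
    · rw [Real.log_div (by positivity) h0.ne', Real.log_div one_ne_zero hcard.ne',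
          Real.log_one]
      ring
  rw [Finset.sum_congr rfl (fun a _ => expand a)] at key
  simp only [Finset.sum_sub_distrib, Finset.sum_neg_distrib] at key
  rw [← Finset.sum_mul, hw1, one_mul] at key
  linarith

theorem subgaussian_decoupling_bound
    {A B : Type*} [Fintype A] [Fintype B] [Nonempty A]
    (p : A × B → ℝ) (hp0 : ∀ ab, 0 ≤ p ab) (hp1 : ∑ ab, p ab = 1)
    (g : A × B → ℝ) (σ : ℝ)
    (hsub : ∀ t : ℝ,
      Real.log (∑ a, ∑ b, (∑ b', p (a, b')) * (∑ a', p (a', b)) *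
          Real.exp (t * (g (a, b) -
            ∑ a', ∑ b', (∑ b'', p (a', b'')) * (∑ a'', p (a'', b')) * g (a', b'))))
        ≤ t ^ 2 * σ ^ 2 / 2)
    (lam : ℝ) (hlam : 0 < lam) :
    (∑ a, ∑ b, (∑ b', p (a, b')) * (∑ a', p (a', b)) * g (a, b)) - (∑ ab, p ab * g ab)
      ≤ lam * (Real.log (Fintype.card A)
            - (-∑ a, ∑ b, p (a, b) * Real.log (p (a, b) / ∑ a', p (a', b))))
        + σ ^ 2 / (2 * lam) := by
  set pA : A → ℝ := fun a => ∑ b, p (a, b) with hpA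
  set pB : B → ℝ := fun b => ∑ a, p (a, b) with hpB
  set q : A × B → ℝ := fun ab => pA ab.1 * pB ab.2 with hq
  have hpA0 : ∀ a, 0 ≤ pA a := fun a => Finset.sum_nonneg (fun b _ => hp0 (a, b))
  have hpB0 : ∀ b, 0 ≤ pB b := fun b => Finset.sum_nonneg (fun a _ => hp0 (a, b))
  have hq0 : ∀ ab, 0 ≤ q ab := fun ab => mul_nonneg (hpA0 _) (hpB0 _)
  have hpA1 : ∑ a, pA a = 1 := by
    rw [← hp1, Fintype.sum_prod_type]
  have hpB1 : ∑ b, pB b = 1 := by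
    rw [show ∑ b, pB b = ∑ b, ∑ a, p (a, b) from rfl, Finset.sum_comm,
      ← Fintype.sum_prod_type, hp1]
  have hq1 : ∑ ab, q ab = 1 := by
    rw [Fintype.sum_prod_type]
    simp only [hq]
    rw [show ∑ a, ∑ b, pA a * pB b = ∑ a, pA a * ∑ b, pB b from
      Finset.sum_congr rfl (fun a _ => (Finset.mul_sum _ _ _).symm)]
    rw [hpB1]
    simpa using hpA1
  have habs : ∀ ab, q ab = 0 → p ab = 0 := by
    rintro ⟨a, b⟩ hab
    rcases mul_eq_zero.mp hab with h | h
    · have := (Finset.sum_eq_zero_iff_of_nonneg (fun b' _ => hp0 (a, b'))).mp h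
      exact this b (Finset.mem_univ b)
    · have := (Finset.sum_eq_zero_iff_of_nonneg (fun a' _ => hp0 (a', b))).mp h
      exact this a (Finset.mem_univ a)
  set μ : ℝ := ∑ ab, q ab * g ab with hμ
  have hμeq : (∑ a, ∑ b, (∑ b', p (a, b')) * (∑ a', p (a', b)) * g (a, b)) = μ := by
    rw [hμ, Fintype.sum_prod_type]
  set t : ℝ := 1 / lam with ht
  have htpos : 0 < t := by positivity
  have hdv := dv_ineq p q (fun ab => t * (μ - g ab)) hp0 hp1 hq0 hq1 habs
  have hmgf : Real.log (∑ ab, q ab * Real.exp (t * (μ - g ab))) ≤ t ^ 2 * σ ^ 2 / 2 := by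
    have h := hsub (-t)
    rw [hμeq] at h
    have heq : (∑ ab : A × B, q ab * Real.exp (t * (μ - g ab)))
        = ∑ a, ∑ b, (∑ b', p (a, b')) * (∑ a', p (a', b)) *
            Real.exp ((-t) * (g (a, b) - μ)) := by
      rw [Fintype.sum_prod_type]
      refine Finset.sum_congr rfl (fun a _ => Finset.sum_congr rfl (fun b _ => ?_))
      rw [show q (a, b) = (∑ b', p (a, b')) * (∑ a', p (a', b)) from rfl]
      ring_nf
    rw [heq]
    calc _ ≤ (-t) ^ 2 * σ ^ 2 / 2 := h
      _ = t ^ 2 * σ ^ 2 / 2 := by ring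
  have hlhs : ∑ ab, p ab * (t * (μ - g ab)) = t * (μ - ∑ ab, p ab * g ab) := by
    calc ∑ ab, p ab * (t * (μ - g ab))
        = ∑ ab, (t * μ * p ab - t * (p ab * g ab)) :=
          Finset.sum_congr rfl (fun ab _ => by ring)
      _ = t * μ * (∑ ab, p ab) - t * ∑ ab, p ab * g ab := by
          rw [Finset.sum_sub_distrib, ← Finset.mul_sum, ← Finset.mul_sum]
      _ = t * (μ - ∑ ab, p ab * g ab) := by rw [hp1]; ring
  set KL : ℝ := ∑ ab, p ab * Real.log (p ab / q ab) with hKL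
  have hmain : t * (μ - ∑ ab, p ab * g ab) ≤ KL + t ^ 2 * σ ^ 2 / 2 := by
    rw [← hlhs]
    calc ∑ ab, p ab * (t * (μ - g ab))
        ≤ KL + Real.log (∑ ab, q ab * Real.exp (t * (μ - g ab))) := hdv
      _ ≤ KL + t ^ 2 * σ ^ 2 / 2 := by linarith
  set Hcond : ℝ := -∑ a, ∑ b, p (a, b) * Real.log (p (a, b) / pB b) with hH
  have hKLbound : KL ≤ Real.log (Fintype.card A) - Hcond := by
    have hpApos : ∀ a b, 0 < p (a, b) → 0 < pA a := fun a b h =>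
      lt_of_lt_of_le h (Finset.single_le_sum (fun b' _ => hp0 (a, b')) (Finset.mem_univ b))
    have hpBpos : ∀ a b, 0 < p (a, b) → 0 < pB b := fun a b h =>
      lt_of_lt_of_le h (Finset.single_le_sum (fun a' _ => hp0 (a', b)) (Finset.mem_univ a))
    have hsplit : KL = (∑ ab : A × B, p ab * Real.log (p ab / pB ab.2))
        - ∑ ab : A × B, p ab * Real.log (pA ab.1) := by
      rw [hKL, ← Finset.sum_sub_distrib]
      refine Finset.sum_congr rfl (fun ab _ => ?_)
      obtain ⟨a, b⟩ := ab
      rcases eq_or_lt_of_le (hp0 (a, b)) with h0 | h0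
      · simp [← h0]
      · have hA := hpApos a b h0
        have hB := hpBpos a b h0
        rw [show q (a, b) = pA a * pB b from rfl,
            Real.log_div h0.ne' (by positivity),
            Real.log_div h0.ne' hB.ne',
            Real.log_mul hA.ne' hB.ne']
        ring
    have hmarg : ∑ ab : A × B, p ab * Real.log (pA ab.1) = ∑ a, pA a * Real.log (pA a) := by
      rw [Fintype.sum_prod_type]
      refine Finset.sum_congr rfl (fun a _ => ?_)
      show ∑ b, p (a, b) * Real.log (pA a) = pA a * Real.log (pA a)
      rw [← Finset.sum_mul]
    have hent := neg_entropy_le_log_card pA hpA0 hpA1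
    have hHeq : Hcond = -∑ ab : A × B, p ab * Real.log (p ab / pB ab.2) := by
      rw [hH, Fintype.sum_prod_type]
    rw [hsplit, hmarg, hHeq]
    linarith
  have hfin : μ - ∑ ab, p ab * g ab ≤ lam * KL + σ ^ 2 / (2 * lam) := by
    have h2 := mul_le_mul_of_nonneg_left hmain hlam.le
    have e1 : lam * (t * (μ - ∑ ab, p ab * g ab)) = μ - ∑ ab, p ab * g ab := by
      rw [ht]; field_simp
    have e2 : lam * (KL + t ^ 2 * σ ^ 2 / 2) = lam * KL + σ ^ 2 / (2 * lam) := by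
      rw [ht]; field_simp
    rw [e1, e2] at h2
    exact h2
  rw [hμeq]
  have hKL2 : lam * KL ≤ lam * (Real.log (Fintype.card A) - Hcond) :=
    mul_le_mul_of_nonneg_left hKLbound hlam.le
  clear_value μ KL Hcond t pA pB q
  linarith
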